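/- Let S₀^ε be the set of pure tripartite states |φ⟩_{RMM'} (R a qubit) for which measurements on M and on M' each predict the computational-basis measurement outcome of R with probability ≥ 1-ε, and S₁^ε the analogous set for the Hadamard basis. If ε < 0.11 then S₀^ε ∩ S₁^ε = ∅. -/

import Mathlib

open scoped Classical ComplexOrder

noncomputable def binEnt (x : ℝ) : ℝ := -x * Real.logb 2 x - (1 - x) * Real.logb 2 (1 - x)

/-- von Neumann entropy (base 2) of a matrix, via eigenvalues (0 if not Hermitian). -/
noncomputable def vnEnt {d : Type*} [Fintype d] [DecidableEq d] (ρ : Matrix d d ℂ) : ℝ :=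
  if h : ρ.IsHermitian then ∑ i, -(h.eigenvalues i) * Real.logb 2 (h.eigenvalues i) else 0

/-- Trace norm of a Hermitian matrix (0 if not Hermitian). -/
noncomputable def traceNorm {d : Type*} [Fintype d] [DecidableEq d] (A : Matrix d d ℂ) : ℝ :=
  if h : A.IsHermitian then ∑ i, |h.eigenvalues i| else 0

/-- the square root `Matrix.PosSemidef.sqrt` of the older Mathlib, spelled out -/
noncomputable def psdSqrt {d : Type*} [Fintype d] [DecidableEq d] {A : Matrix d d ℂ}
    (hA : A.PosSemidef) : Matrix d d ℂ :=
  hA.1.eigenvectorUnitary.1 * Matrix.diagonal ((fun x : ℝ => (x : ℂ)) ∘ Real.sqrt ∘ hA.1.eigenvalues) *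
    (star hA.1.eigenvectorUnitary : Matrix d d ℂ)

noncomputable def fidelity {d : Type*} [Fintype d] [DecidableEq d] (ρ σ : Matrix d d ℂ) : ℝ :=
  if hσ : σ.PosSemidef then
    if h : (psdSqrt hσ * ρ * psdSqrt hσ).IsHermitian then ∑ i, Real.sqrt (h.eigenvalues i) else 0
  else 0

noncomputable def pdist {d : Type*} [Fintype d] [DecidableEq d] (ρ σ : Matrix d d ℂ) : ℝ :=
  Real.sqrt (1 - (fidelity ρ σ) ^ 2)

def IsState {d : Type*} [Fintype d] [DecidableEq d] (ρ : Matrix d d ℂ) : Prop :=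
  ρ.PosSemidef ∧ ρ.trace = 1

/-- partial trace over the second tensor factor -/
noncomputable def ptraceR {a b : Type*} [Fintype b] (ρ : Matrix (a × b) (a × b) ℂ) : Matrix a a ℂ :=
  fun i j => ∑ k, ρ (i, k) (j, k)

/-- partial trace over the first tensor factor -/
noncomputable def ptraceL {a b : Type*} [Fintype a] (ρ : Matrix (a × b) (a × b) ℂ) : Matrix b b ℂ :=
  fun i j => ∑ k, ρ (k, i) (k, j)

/-- conditional von Neumann entropy H(A|B) of a state on A × B -/
noncomputable def condEnt {a b : Type*} [Fintype a] [Fintype b] [DecidableEq a] [DecidableEq b]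
    (ρ : Matrix (a × b) (a × b) ℂ) : ℝ := vnEnt ρ - vnEnt (ptraceL ρ)

/-- computational-basis projector on a qubit -/
noncomputable def Pc (b : Fin 2) : Matrix (Fin 2) (Fin 2) ℂ := fun i j => if i = b ∧ j = b then 1 else 0

/-- Hadamard-basis projector on a qubit -/
noncomputable def Ph (b : Fin 2) : Matrix (Fin 2) (Fin 2) ℂ :=
  fun i j => (1 / 2 : ℂ) * (-1) ^ ((i : ℕ) * (b : ℕ)) * (-1) ^ ((b : ℕ) * (j : ℕ))

/-- measure the first (qubit) factor with rank-one projectors `P`, storing the outcome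
classically in its place -/
noncomputable def cqMeasure {m : Type*} [Fintype m] (P : Fin 2 → Matrix (Fin 2) (Fin 2) ℂ)
    (ρ : Matrix (Fin 2 × m) (Fin 2 × m) ℂ) : Matrix (Fin 2 × m) (Fin 2 × m) ℂ :=
  fun zi z'j => if zi.1 = z'j.1 then ∑ r, ∑ t, (P zi.1) r t * ρ (t, zi.2) (r, z'j.2) else 0

/-- outer product |ψ⟩⟨ψ| of a vector -/
noncomputable def outer {d : Type*} (ψ : d → ℂ) : Matrix d d ℂ := fun i j => ψ i * (starRingEnd ℂ) (ψ j)

/-- trace out the third subsystem -/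
noncomputable def trThird {dE dF : ℕ} (ρ : Matrix (Fin 2 × Fin dE × Fin dF) (Fin 2 × Fin dE × Fin dF) ℂ) :
    Matrix (Fin 2 × Fin dE) (Fin 2 × Fin dE) ℂ :=
  fun p q => ∑ f, ρ (p.1, p.2, f) (q.1, q.2, f)

/-- trace out the second subsystem -/
noncomputable def trSecond {dE dF : ℕ} (ρ : Matrix (Fin 2 × Fin dE × Fin dF) (Fin 2 × Fin dE × Fin dF) ℂ) :
    Matrix (Fin 2 × Fin dF) (Fin 2 × Fin dF) ℂ :=
  fun p q => ∑ e, ρ (p.1, e, p.2) (q.1, e, q.2)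

open Kronecker in
/-- probability that local measurements `{O b}` (acting on `M ⊗ M'`) reproduce the outcome of
the rank-one measurement `{R b}` on the qubit `R` of the pure state `ψ` on `R ⊗ M ⊗ M'`. -/
noncomputable def guessProb {dM dM' : ℕ} (R : Fin 2 → Matrix (Fin 2) (Fin 2) ℂ)
    (O : Fin 2 → Matrix (Fin dM × Fin dM') (Fin dM × Fin dM') ℂ)
    (ψ : Fin 2 × Fin dM × Fin dM' → ℂ) : ℝ :=
  (∑ b, ((R b ⊗ₖ O b) * outer ψ).trace).re

open Kronecker in
/-- the set of normalized pure states on `R ⊗ M ⊗ M'` for which a measurement on `M` and a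
measurement on `M'` each predict, with probability at least `1 - ε`, the outcome of measuring
the qubit `R` with the rank-one basis measurement `{R b}`. -/
def predSet {dM dM' : ℕ} (R : Fin 2 → Matrix (Fin 2) (Fin 2) ℂ) (ε : ℝ) :
    Set (Fin 2 × Fin dM × Fin dM' → ℂ) :=
  {ψ | (∑ p, ‖ψ p‖ ^ 2 = 1) ∧
    (∃ Λ : Fin 2 → Matrix (Fin dM) (Fin dM) ℂ, (∀ b, (Λ b).PosSemidef) ∧
      Λ 0 + Λ 1 = 1 ∧ 1 - ε ≤ guessProb R (fun b => Λ b ⊗ₖ (1 : Matrix (Fin dM') (Fin dM') ℂ)) ψ) ∧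
    (∃ Λ' : Fin 2 → Matrix (Fin dM') (Fin dM') ℂ, (∀ b, (Λ' b).PosSemidef) ∧
      Λ' 0 + Λ' 1 = 1 ∧ 1 - ε ≤ guessProb R (fun b => (1 : Matrix (Fin dM) (Fin dM) ℂ) ⊗ₖ Λ' b) ψ)}


section Aux
open Matrix Kronecker

open scoped Matrix.Norms.L2Operator MatrixOrder in
private lemma psd_eq_ct_mul_self {n : Type*} [Fintype n] [DecidableEq n] {A : Matrix n n ℂ}
    (hA : A.PosSemidef) : ∃ B : Matrix n n ℂ, A = Bᴴ * B := by
  obtain ⟨B, hB⟩ := CStarAlgebra.nonneg_iff_eq_star_mul_self.mp hA.nonneg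
  exact ⟨B, hB⟩

private lemma kron_conjT {l m n p : Type*} (A : Matrix l m ℂ) (B : Matrix n p ℂ) :
    (A ⊗ₖ B)ᴴ = Aᴴ ⊗ₖ Bᴴ := by
  ext ⟨i,j⟩ ⟨k,l⟩
  simp [Matrix.conjTranspose_apply, Matrix.kroneckerMap_apply, star_mul', mul_comm]

private lemma kron_psd {m n : Type*} [Fintype m] [Fintype n] [DecidableEq m] [DecidableEq n]
    {A : Matrix m m ℂ} {B : Matrix n n ℂ} (hA : A.PosSemidef) (hB : B.PosSemidef) :
    (A ⊗ₖ B).PosSemidef := by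
  obtain ⟨C, rfl⟩ := psd_eq_ct_mul_self hA
  obtain ⟨D, rfl⟩ := psd_eq_ct_mul_self hB
  rw [show (Cᴴ * C) ⊗ₖ (Dᴴ * D) = (Cᴴ ⊗ₖ Dᴴ) * (C ⊗ₖ D) from
    Matrix.mul_kronecker_mul _ _ _ _, ← kron_conjT]
  exact Matrix.posSemidef_conjTranspose_mul_self _

private lemma psd_trace_nonneg {n : Type*} [Fintype n] [DecidableEq n] {A : Matrix n n ℂ}
    (hA : A.PosSemidef) : 0 ≤ A.trace := by
  obtain ⟨B, rfl⟩ := psd_eq_ct_mul_self hA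
  rw [Matrix.trace]
  refine Finset.sum_nonneg fun i _ => ?_
  rw [Matrix.diag_apply, Matrix.mul_apply]
  exact Finset.sum_nonneg fun j _ => by
    simpa [Matrix.conjTranspose_apply] using star_mul_self_nonneg (B j i)

private lemma psd_trace_mul_nonneg {n : Type*} [Fintype n] [DecidableEq n] {A B : Matrix n n ℂ}
    (hA : A.PosSemidef) (hB : B.PosSemidef) : 0 ≤ (A * B).trace := by
  obtain ⟨C, rfl⟩ := psd_eq_ct_mul_self hB
  rw [← Matrix.mul_assoc, Matrix.trace_mul_cycle]
  exact psd_trace_nonneg (hA.mul_mul_conjTranspose_same C)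

private lemma outer_psd {d : Type*} [Fintype d] [DecidableEq d] (ψ : d → ℂ) :
    (outer ψ).PosSemidef := by
  refine Matrix.PosSemidef.of_dotProduct_mulVec_nonneg ?_ ?_
  · ext i j; simp [outer, Matrix.conjTranspose_apply, mul_comm]
  · intro x
    have h : star x ⬝ᵥ (outer ψ).mulVec x
        = star (∑ j, star (ψ j) * x j) * (∑ j, star (ψ j) * x j) := by
      simp only [dotProduct, Matrix.mulVec, outer, star_sum, star_mul', star_star,
        Finset.sum_mul, Finset.mul_sum, Pi.star_apply, starRingEnd_apply]
      rw [Finset.sum_comm]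
      exact Finset.sum_congr rfl fun i _ => Finset.sum_congr rfl fun j _ => by ring
    rw [h]
    exact star_mul_self_nonneg _

private lemma outer_trace {d : Type*} [Fintype d] [DecidableEq d] (ψ : d → ℂ)
    (h : ∑ p, ‖ψ p‖ ^ 2 = 1) : (outer ψ).trace = 1 := by
  have : (outer ψ).trace = ((∑ p, ‖ψ p‖ ^ 2 : ℝ) : ℂ) := by
    rw [Matrix.trace]
    push_cast
    refine Finset.sum_congr rfl fun i _ => ?_
    rw [Matrix.diag_apply]
    show ψ i * (starRingEnd ℂ) (ψ i) = _
    rw [Complex.mul_conj]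
    norm_cast
    rw [Complex.normSq_eq_norm_sq, Complex.sq_norm]
  rw [this, h]; norm_num

set_option maxHeartbeats 1000000 in
private lemma key_eq (a b : Fin 2) :
    ∃ v : Fin 2 → ℂ,
    (((1 + (Real.sqrt 2)⁻¹ : ℝ) : ℂ) • (1 : Matrix (Fin 2) (Fin 2) ℂ) - (Pc a + Ph b)) = outer v := by
  have h2 : Real.sqrt 2 * Real.sqrt 2 = 2 := Real.mul_self_sqrt (by norm_num)
  have hs1 : (1:ℝ) ≤ Real.sqrt 2 := by nlinarith [Real.sqrt_nonneg 2]
  have hinv : (Real.sqrt 2)⁻¹ = Real.sqrt 2 / 2 := by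
    rw [inv_eq_one_div, div_eq_div_iff (by positivity) (by norm_num)]
    linarith [h2]
  have hp : (0:ℝ) ≤ (Real.sqrt 2)⁻¹ - 1/2 := by rw [hinv]; nlinarith
  have hq : (0:ℝ) ≤ (Real.sqrt 2)⁻¹ + 1/2 := by rw [hinv]; nlinarith
  have hpp := Real.mul_self_sqrt hp
  have hqq := Real.mul_self_sqrt hq
  have hpq : Real.sqrt ((Real.sqrt 2)⁻¹ - 1/2) * Real.sqrt ((Real.sqrt 2)⁻¹ + 1/2) = 1/2 := by
    rw [← Real.sqrt_mul hp,
      show ((Real.sqrt 2)⁻¹ - 1/2) * ((Real.sqrt 2)⁻¹ + 1/2) = (1/2:ℝ)^2 by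
        rw [hinv]; nlinarith,
      Real.sqrt_sq (by norm_num)]
  refine ⟨fun i => ((if i = a then Real.sqrt ((Real.sqrt 2)⁻¹ - 1/2)
      else Real.sqrt ((Real.sqrt 2)⁻¹ + 1/2) : ℝ) : ℂ) *
    (if i = 1 then (-1:ℂ)^((b:ℕ)+1) else 1), ?_⟩
  have hA : ((Real.sqrt ((Real.sqrt 2)⁻¹ - 1/2) : ℝ) : ℂ) * ((Real.sqrt ((Real.sqrt 2)⁻¹ - 1/2) : ℝ) : ℂ)
      = ((Real.sqrt 2 : ℝ) : ℂ)⁻¹ - 1/2 := by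
    rw [← Complex.ofReal_mul, hpp]; push_cast; ring
  have hB : ((Real.sqrt ((Real.sqrt 2)⁻¹ + 1/2) : ℝ) : ℂ) * ((Real.sqrt ((Real.sqrt 2)⁻¹ + 1/2) : ℝ) : ℂ)
      = ((Real.sqrt 2 : ℝ) : ℂ)⁻¹ + 1/2 := by
    rw [← Complex.ofReal_mul, hqq]; push_cast; ring
  have hAB : ((Real.sqrt ((Real.sqrt 2)⁻¹ - 1/2) : ℝ) : ℂ) * ((Real.sqrt ((Real.sqrt 2)⁻¹ + 1/2) : ℝ) : ℂ)
      = 1/2 := by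
    rw [← Complex.ofReal_mul, hpq]; push_cast; ring
  have hppR : Real.sqrt ((Real.sqrt 2)⁻¹ - 1/2) * Real.sqrt ((Real.sqrt 2)⁻¹ - 1/2)
      = Real.sqrt 2 / 2 - 1/2 := by rw [hpp, hinv]
  have hqqR : Real.sqrt ((Real.sqrt 2)⁻¹ + 1/2) * Real.sqrt ((Real.sqrt 2)⁻¹ + 1/2)
      = Real.sqrt 2 / 2 + 1/2 := by rw [hqq, hinv]
  generalize hgA : Real.sqrt ((Real.sqrt 2)⁻¹ - 1/2) = A at hppR hpq hA hAB ⊢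
  generalize hgB : Real.sqrt ((Real.sqrt 2)⁻¹ + 1/2) = B at hqqR hpq hB hAB ⊢
  ext i j
  fin_cases a <;> fin_cases b <;> fin_cases i <;> fin_cases j <;>
    simp only [outer, Pc, Ph, Matrix.sub_apply, Matrix.add_apply, Matrix.smul_apply,
      Matrix.one_apply, smul_eq_mul, Fin.isValue, _root_.map_mul, Complex.conj_ofReal,
      map_pow, _root_.map_neg, _root_.map_one, if_true, if_false] <;>
    (try push_cast) <;>
    (try norm_num [Complex.ext_iff]) <;>
    (first
      | ring1
      | linear_combination hA
      | linear_combination hB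
      | linear_combination hAB
      | linear_combination -hAB
      | linear_combination -hA
      | linear_combination -hB
      | linear_combination hppR
      | linear_combination -hppR
      | linear_combination hqqR
      | linear_combination -hqqR
      | linear_combination hpq
      | linear_combination -hpq)

end Aux

/-- for `ε < 0.11` the sets `S₀^ε` and `S₁^ε` are disjoint. -/
theorem S0_inter_S1_empty (dM dM' : ℕ) (ε : ℝ) (hε : ε < 0.11) :
    (predSet (dM := dM) (dM' := dM') Pc ε) ∩ (predSet Ph ε) = ∅ := by
  open Matrix Kronecker in
  classical
  rw [Set.eq_empty_iff_forall_notMem]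
  rintro ψ ⟨⟨hnorm, ⟨Λ, hΛp, hΛ1, hΛg⟩, -⟩, -, -, ⟨Λ', hΛ'p, hΛ'1, hΛ'g⟩⟩
  set ρ := outer ψ with hρdef
  have hρ : ρ.PosSemidef := outer_psd ψ
  have htr : ρ.trace = 1 := outer_trace ψ hnorm
  set c : ℝ := 1 + (Real.sqrt 2)⁻¹ with hc
  set t : Fin 2 → Fin 2 → ℝ :=
    fun a b => ((((Pc a + Ph b) ⊗ₖ (Λ a ⊗ₖ Λ' b)) * ρ).trace).re with ht
  set u : Fin 2 → Fin 2 → ℝ :=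
    fun a b => ((((1 : Matrix (Fin 2) (Fin 2) ℂ) ⊗ₖ (Λ a ⊗ₖ Λ' b)) * ρ).trace).re with hu
  -- key pointwise bound
  have key : ∀ a b : Fin 2, t a b ≤ c * u a b := by
    intro a b
    simp only [ht, hu]
    obtain ⟨v, hv⟩ := key_eq a b
    have hT : ((Λ a) ⊗ₖ (Λ' b)).PosSemidef := kron_psd (hΛp a) (hΛ'p b)
    have h1 : ((((c:ℂ)) • (1 : Matrix (Fin 2) (Fin 2) ℂ) - (Pc a + Ph b)) ⊗ₖ (Λ a ⊗ₖ Λ' b)).PosSemidef := by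
      rw [hv]; exact kron_psd (outer_psd v) hT
    have h2 : 0 ≤ (((((c:ℂ)) • (1 : Matrix (Fin 2) (Fin 2) ℂ) - (Pc a + Ph b)) ⊗ₖ (Λ a ⊗ₖ Λ' b)) * ρ).trace :=
      psd_trace_mul_nonneg h1 hρ
    have h3 : (((c:ℂ) • (1 : Matrix (Fin 2) (Fin 2) ℂ) - (Pc a + Ph b)) ⊗ₖ (Λ a ⊗ₖ Λ' b))
        = (c:ℂ) • ((1 : Matrix (Fin 2) (Fin 2) ℂ) ⊗ₖ (Λ a ⊗ₖ Λ' b))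
          - (Pc a + Ph b) ⊗ₖ (Λ a ⊗ₖ Λ' b) := by
      ext ⟨i, m⟩ ⟨j, n⟩
      simp only [Matrix.kroneckerMap_apply, Matrix.sub_apply, Matrix.smul_apply,
        smul_eq_mul, sub_mul, mul_assoc]
    rw [h3, Matrix.sub_mul, Matrix.trace_sub, Matrix.smul_mul, Matrix.trace_smul,
      smul_eq_mul] at h2
    have h4 := (Complex.le_def.mp h2).1
    simp only [Complex.zero_re, Complex.sub_re, Complex.mul_re, Complex.ofReal_re,
      Complex.ofReal_im, zero_mul, sub_zero] at h4
    linarith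
  -- splitting lemmas
  have splitZ : ∀ a : Fin 2,
      Pc a ⊗ₖ (Λ a ⊗ₖ (1 : Matrix (Fin dM') (Fin dM') ℂ))
        = Pc a ⊗ₖ (Λ a ⊗ₖ Λ' 0) + Pc a ⊗ₖ (Λ a ⊗ₖ Λ' 1) := by
    intro a
    rw [← Matrix.kronecker_add, ← Matrix.kronecker_add, hΛ'1]
  have splitX : ∀ b : Fin 2,
      Ph b ⊗ₖ ((1 : Matrix (Fin dM) (Fin dM) ℂ) ⊗ₖ Λ' b)
        = Ph b ⊗ₖ (Λ 0 ⊗ₖ Λ' b) + Ph b ⊗ₖ (Λ 1 ⊗ₖ Λ' b) := by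
    intro b
    rw [← Matrix.kronecker_add, ← Matrix.add_kronecker, hΛ1]
  have addRP : ∀ (a b : Fin 2) (T : Matrix (Fin dM × Fin dM') (Fin dM × Fin dM') ℂ),
      (Pc a + Ph b) ⊗ₖ T = Pc a ⊗ₖ T + Ph b ⊗ₖ T := fun a b T => Matrix.add_kronecker _ _ _
  -- total guessing probability
  have hsum : guessProb Pc (fun b => Λ b ⊗ₖ (1 : Matrix (Fin dM') (Fin dM') ℂ)) ψ
      + guessProb Ph (fun b => (1 : Matrix (Fin dM) (Fin dM) ℂ) ⊗ₖ Λ' b) ψ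
      = t 0 0 + t 0 1 + t 1 0 + t 1 1 := by
    simp only [guessProb, Fin.sum_univ_two, ht, ← hρdef]
    rw [splitZ 0, splitZ 1, splitX 0, splitX 1, addRP 0 0, addRP 0 1, addRP 1 0, addRP 1 1]
    simp only [Matrix.add_mul, Matrix.trace_add, Complex.add_re]
    ring
  -- normalization
  have hnormal : u 0 0 + u 0 1 + u 1 0 + u 1 1 = 1 := by
    have h1 : ((1 : Matrix (Fin 2) (Fin 2) ℂ) ⊗ₖ (Λ 0 ⊗ₖ Λ' 0))
        + (1 : Matrix (Fin 2) (Fin 2) ℂ) ⊗ₖ (Λ 0 ⊗ₖ Λ' 1)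
        + (1 : Matrix (Fin 2) (Fin 2) ℂ) ⊗ₖ (Λ 1 ⊗ₖ Λ' 0)
        + (1 : Matrix (Fin 2) (Fin 2) ℂ) ⊗ₖ (Λ 1 ⊗ₖ Λ' 1)
        = (1 : Matrix (Fin 2 × Fin dM × Fin dM') (Fin 2 × Fin dM × Fin dM') ℂ) := by
      have hone : (1:Matrix (Fin 2) (Fin 2) ℂ) ⊗ₖ ((Λ 0 + Λ 1) ⊗ₖ (Λ' 0 + Λ' 1))
          = (1 : Matrix (Fin 2 × Fin dM × Fin dM') (Fin 2 × Fin dM × Fin dM') ℂ) := by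
        rw [hΛ1, hΛ'1, Matrix.one_kronecker_one, Matrix.one_kronecker_one]
      rw [← hone]
      simp only [Matrix.add_kronecker, Matrix.kronecker_add]
      abel
    have h2 : u 0 0 + u 0 1 + u 1 0 + u 1 1
        = (((((1 : Matrix (Fin 2) (Fin 2) ℂ) ⊗ₖ (Λ 0 ⊗ₖ Λ' 0))
          + (1 : Matrix (Fin 2) (Fin 2) ℂ) ⊗ₖ (Λ 0 ⊗ₖ Λ' 1)
          + (1 : Matrix (Fin 2) (Fin 2) ℂ) ⊗ₖ (Λ 1 ⊗ₖ Λ' 0)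
          + (1 : Matrix (Fin 2) (Fin 2) ℂ) ⊗ₖ (Λ 1 ⊗ₖ Λ' 1)) * ρ).trace).re := by
      simp only [hu, Matrix.add_mul, Matrix.trace_add, Complex.add_re]
      try ring
    rw [h2, h1, Matrix.one_mul, htr]
    norm_num
  -- collect the inequality
  have hfinal : 2 - 2*ε ≤ c := by
    have g1 := hΛg
    have g2 := hΛ'g
    have k1 := key 0 0
    have k2 := key 0 1
    have k3 := key 1 0
    have k4 := key 1 1
    nlinarith [hsum, hnormal]
  -- numeric contradiction
  have h2 : Real.sqrt 2 * Real.sqrt 2 = 2 := Real.mul_self_sqrt (by norm_num)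
  have hs0 : (0:ℝ) < Real.sqrt 2 := Real.sqrt_pos.mpr (by norm_num)
  have hinv : (Real.sqrt 2)⁻¹ = Real.sqrt 2 / 2 := by
    rw [inv_eq_one_div, div_eq_div_iff hs0.ne' (by norm_num)]
    linarith [h2]
  rw [hc, hinv] at hfinal
  nlinarith [h2, hs0, hfinal, hε]
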